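/- Let m be a familial monad on c ⥤ Type (familial and cartesian). For each object C of c let η(C) ∈ m(1)(C) denote the unit operation (the image of the unique element under the unit component at the terminal copresheaf), so that the arity m[η(C)] is isomorphic to the representable copresheaf at C; for z ∈ m[M](C') write the inert morphism η(C') ⟶ M in Θ_m induced by z. Then a presheaf P : Θ_mᵒᵖ ⥤ Type is isomorphic to the nerve N_m(X) of some m-algebra X if and only if P satisfies the Segal condition: for every object M of Θ_m, the canonical map from P(M) to the limit, over the category of elements of the arity m[M] (objects: pairs (C', z ∈ m[M](C'))), of the diagram (C', z) ↦ P(η(C')) with transition maps induced by the corresponding morphisms between unit operations, is a bijection. -/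

import Mathlib

namespace Fam
open CategoryTheory Opposite Limits
private lemma sigmaExt {α : Type} {β : α → Type} {a a' : α} {b : β a} {b' : β a'}
    (h : a = a') (h' : HEq b b') : (⟨a, b⟩ : Σ x, β x) = ⟨a', b'⟩ := by
  subst h; cases h'; rfl
variable {c d : Type} [SmallCategory c] [SmallCategory d]
def elHom (pos : c ⥤ Type) {C C' : c} (f : C ⟶ C') (I : pos.obj C) :
    pos.elementsMk C I ⟶ pos.elementsMk C' (pos.map f I) :=
  CategoryOfElements.homMk _ _ f rfl
lemma eqToHom_val {pos : c ⥤ Type} {x y : pos.Elements} (E : x = y) :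
    (eqToHom E).val = eqToHom (congrArg Sigma.fst E) := by
  subst E; simp
@[simps]
def famApply (pos : c ⥤ Type) (ar : pos.Elementsᵒᵖ ⥤ d ⥤ Type) :
    (d ⥤ Type) ⥤ c ⥤ Type where
  obj X :=
    { obj := fun C => Σ I : pos.obj C, ar.obj (op (pos.elementsMk C I)) ⟶ X
      map := fun {C C'} f => TypeCat.ofHom fun x => ⟨pos.map f x.1, ar.map (elHom pos f x.1).op ≫ x.2⟩
      map_id := by
        intro C
        apply ConcreteCategory.hom_ext
        intro x
        obtain ⟨I, g⟩ := x
        have h : pos.map (𝟙 C) I = I := by simp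
        have hE : pos.elementsMk C I = pos.elementsMk C (pos.map (𝟙 C) I) := by rw [h]
        have he : elHom pos (𝟙 C) I = eqToHom hE := by
          apply CategoryOfElements.ext
          rw [eqToHom_val]
          simp [elHom]
        dsimp
        refine sigmaExt h ?_
        rw [he]
        simp [eqToHom_op, eqToHom_map]
      map_comp := by
        intro C C' C'' f g
        apply ConcreteCategory.hom_ext
        intro x
        obtain ⟨I, u⟩ := x
        have h : pos.map (f ≫ g) I = pos.map g (pos.map f I) := by simp
        have hE : pos.elementsMk C'' (pos.map (f ≫ g) I)
            = pos.elementsMk C'' (pos.map g (pos.map f I)) := by rw [h]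
        have hcomp : elHom pos f I ≫ elHom pos g (pos.map f I)
            = elHom pos (f ≫ g) I ≫ eqToHom hE := by
          apply CategoryOfElements.ext
          rw [CategoryOfElements.comp_val, CategoryOfElements.comp_val, eqToHom_val]
          simp [elHom]
        dsimp
        refine sigmaExt h ?_
        rw [← Category.assoc, ← ar.map_comp, ← op_comp, hcomp, op_comp, ar.map_comp,
          Category.assoc]
        simp [eqToHom_op, eqToHom_map] }
  map {X Y} t :=
    { app := fun C => TypeCat.ofHom fun x => ⟨x.1, x.2 ≫ t⟩
      naturality := by
        intro C C' f
        apply ConcreteCategory.hom_ext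
        intro x
        dsimp
        rw [Category.assoc] }
  map_id := by
    intro X
    apply NatTrans.ext
    funext C
    apply ConcreteCategory.hom_ext
    intro x
    dsimp
    rw [Category.comp_id]
  map_comp := by
    intro X Y Z s t
    apply NatTrans.ext
    funext C
    apply ConcreteCategory.hom_ext
    intro x
    dsimp
    rw [Category.assoc]

/-- The unit exhibiting `famApply pos (ar ⋙ G)` as the right coclosure `⌈F/G⌉`,
i.e. the left Kan extension of the familial functor `F = famApply pos ar` along `G`. -/
def coclosureUnit {e : Type} [SmallCategory e] (pos : c ⥤ Type)
    (ar : pos.Elementsᵒᵖ ⥤ e ⥤ Type) (G : (e ⥤ Type) ⥤ d ⥤ Type) :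
    famApply pos ar ⟶ G ⋙ famApply pos (ar ⋙ G) where
  app X :=
    { app := fun C => TypeCat.ofHom fun x => ⟨x.1, G.map x.2⟩
      naturality := by
        intro C C' f
        apply ConcreteCategory.hom_ext
        intro x
        show (⟨pos.map f x.1, G.map (ar.map (elHom pos f x.1).op ≫ x.2)⟩ :
            Σ I : pos.obj C', (ar ⋙ G).obj (op (pos.elementsMk C' I)) ⟶ G.obj X)
          = ⟨pos.map f x.1, G.map (ar.map (elHom pos f x.1).op) ≫ G.map x.2⟩
        rw [G.map_comp] }
  naturality := by
    intro X Y t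
    apply NatTrans.ext
    funext C
    apply ConcreteCategory.hom_ext
    intro x
    show (⟨x.1, G.map (x.2 ≫ t)⟩ :
        Σ I : pos.obj C, (ar ⋙ G).obj (op (pos.elementsMk C I)) ⟶ G.obj Y)
      = ⟨x.1, G.map x.2 ≫ G.map t⟩
    rw [G.map_comp]



section Aux
universe v u

private lemma sigSnd {α : Type} {β : α → Type} {a : α} {b b' : β a}
    (h : (⟨a, b⟩ : Σ x, β x) = ⟨a, b'⟩) : b = b' := by
  injection h

variable {D : Type u} [Category.{v} D] (T : Monad D)

/-- The algebra morphism from a free algebra determined by a map into the carrier. -/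
def extHom (Y : T.Algebra) {A : D} (k : A ⟶ Y.A) : T.free.obj A ⟶ Y where
  f := T.map k ≫ Y.a
  h := by
    show T.map (T.map k ≫ Y.a) ≫ Y.a = T.μ.app A ≫ (T.map k ≫ Y.a)
    simp only [Functor.map_comp, Category.assoc]
    rw [← NatTrans.naturality_assoc T.μ k, Monad.Algebra.assoc]
    simp [Functor.comp_map]

lemma eta_extHom (Y : T.Algebra) {A : D} (k : A ⟶ Y.A) :
    T.η.app A ≫ (extHom T Y k).f = k := by
  show T.η.app A ≫ T.map k ≫ Y.a = k
  rw [← Category.assoc, ← T.η.naturality k, Category.assoc, Y.unit]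
  simp

lemma extHom_unique (Y : T.Algebra) {A : D} (u : T.free.obj A ⟶ Y) :
    extHom T Y (T.η.app A ≫ u.f) = u := by
  apply Monad.Algebra.Hom.ext
  show T.map (T.η.app A ≫ u.f) ≫ Y.a = u.f
  erw [T.map_comp, Category.assoc, u.h, ← Category.assoc]
  have h1 : T.map (T.η.app A) ≫ (T.free.obj A).a = 𝟙 _ := T.right_unit A
  erw [h1, Category.id_comp]

lemma freeMap_comp_extHom (Y : T.Algebra) {A' A : D} (j : A' ⟶ A) (k : A ⟶ Y.A) :
    T.free.map j ≫ extHom T Y k = extHom T Y (j ≫ k) := by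
  apply Monad.Algebra.Hom.ext
  show T.map j ≫ T.map k ≫ Y.a = T.map (j ≫ k) ≫ Y.a
  rw [T.map_comp, Category.assoc]

/-- The Kleisli morphism between free algebras. -/
def kl {A B : D} (k : A ⟶ T.obj B) : T.free.obj A ⟶ T.free.obj B :=
  extHom T (T.free.obj B) k

lemma freeMap_comp_kl {A' A B : D} (j : A' ⟶ A) (k : A ⟶ T.obj B) :
    T.free.map j ≫ kl T k = kl T (j ≫ k) :=
  freeMap_comp_extHom T (T.free.obj B) j k

lemma kl_comp_extHom (Y : T.Algebra) {A B : D} (k : A ⟶ T.obj B) (k' : B ⟶ Y.A) :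
    kl T k ≫ extHom T Y k' = extHom T Y (k ≫ T.map k' ≫ Y.a) := by
  apply Monad.Algebra.Hom.ext
  show (T.map k ≫ T.μ.app B) ≫ T.map k' ≫ Y.a = T.map (k ≫ T.map k' ≫ Y.a) ≫ Y.a
  simp only [Functor.map_comp, Category.assoc]
  rw [← NatTrans.naturality_assoc T.μ k', Monad.Algebra.assoc]
  simp [Functor.comp_map]

lemma kl_comp_kl {A B B' : D} (k : A ⟶ T.obj B) (k' : B ⟶ T.obj B') :
    kl T k ≫ kl T k' = kl T (k ≫ T.map k' ≫ T.μ.app B') :=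
  kl_comp_extHom T (T.free.obj B') k k'

lemma kl_comp_freeMap {A B B' : D} (k : A ⟶ T.obj B) (t : B ⟶ B') :
    kl T k ≫ T.free.map t = kl T (k ≫ T.map t) := by
  apply Monad.Algebra.Hom.ext
  show (T.map k ≫ T.μ.app B) ≫ T.map t = T.map (k ≫ T.map t) ≫ T.μ.app B'
  simp only [Functor.map_comp, Category.assoc]
  rw [← NatTrans.naturality T.μ t]
  simp [Functor.comp_map]

lemma kl_eta {A B : D} (j : A ⟶ B) : kl T (j ≫ T.η.app B) = T.free.map j := by
  apply Monad.Algebra.Hom.ext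
  show T.map (j ≫ T.η.app B) ≫ T.μ.app B = T.map j
  rw [T.map_comp, Category.assoc, T.right_unit]
  simp

end Aux

section Aux2

variable {c : Type} [SmallCategory c]

lemma coyEq_symm_comp {C : c} {X Y : c ⥤ Type} (x : X.obj C) (t : X ⟶ Y) :
    coyonedaEquiv.symm x ≫ t = coyonedaEquiv.symm (t.app C x) := by
  apply coyonedaEquiv.injective
  rw [coyonedaEquiv_comp, Equiv.apply_symm_apply, Equiv.apply_symm_apply]

lemma coyEq_symm_map {C C' : c} {X : c ⥤ Type} (f : C ⟶ C') (x : X.obj C) :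
    coyoneda.map f.op ≫ coyonedaEquiv.symm x = coyonedaEquiv.symm (X.map f x) :=
  (coyonedaEquiv_symm_map f x).symm

private lemma exists_of_isPullback {P X Y Z : Type} {fst : P ⟶ X} {snd : P ⟶ Y}
    {f : X ⟶ Z} {g : Y ⟶ Z} (h : IsPullback fst snd f g) (x : X) (y : Y)
    (hxy : f x = g y) : ∃ p : P, fst p = x ∧ snd p = y := by
  refine ⟨h.lift (TypeCat.ofHom fun _ : PUnit => x) (TypeCat.ofHom fun _ => y) (by ext; exact hxy) PUnit.unit, ?_, ?_⟩
  · exact types_congr_hom (h.lift_fst (TypeCat.ofHom fun _ : PUnit => x) (TypeCat.ofHom fun _ => y) (by ext; exact hxy)) _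
  · exact types_congr_hom (h.lift_snd (TypeCat.ofHom fun _ : PUnit => x) (TypeCat.ofHom fun _ => y) (by ext; exact hxy)) _

end Aux2

section Statement6

variable {c : Type} [SmallCategory c]
  (m : Monad (c ⥤ Type)) {posm : c ⥤ Type} (arm : posm.Elementsᵒᵖ ⥤ c ⥤ Type)

/-- The free `m`-algebra on the arity of the operation `M`. -/
def theoryObj (M : posm.Elements) : m.Algebra :=
  m.free.obj (arm.obj (op M))

/-- The theory category `Θ_m`. -/
def Theta : Type :=
  InducedCategory m.Algebra (theoryObj m arm)

instance : Category (Theta m arm) :=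
  InducedCategory.instCategory (F := theoryObj m arm)

/-- An operation, regarded as an object of `Θ_m`. -/
def toTheta (M : posm.Elements) : Theta m arm := M

/-- The inclusion `Θ_m ⥤ m-Alg`. -/
def thetaIncl : Theta m arm ⥤ m.Algebra :=
  inducedFunctor (theoryObj m arm)

/-- The nerve functor `N_m : m-Alg ⥤ (Θ_mᵒᵖ ⥤ Type)` (restricted Yoneda). -/
def nerveFunctor : m.Algebra ⥤ ((Theta m arm)ᵒᵖ ⥤ Type) :=
  yoneda ⋙ (Functor.whiskeringLeft (Theta m arm)ᵒᵖ m.Algebraᵒᵖ Type).obj (thetaIncl m arm).op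

/-- The terminal copresheaf on `c`. -/
def termPSh : c ⥤ Type := (Functor.const c).obj PUnit

variable (em : famApply posm arm ≅ (m : (c ⥤ Type) ⥤ c ⥤ Type))

/-- The unit operation `η(C) ∈ m(1)(C)`: the image of the unique element under the unit
component of `m` at the terminal copresheaf. -/
def unitOp (C : c) : posm.obj C :=
  ((em.inv.app (termPSh)).app C ((m.η.app (termPSh)).app C PUnit.unit)).1

/-- The unit operation at `C`, as an object of `Θ_m`. -/
def unitObj (C : c) : Theta m arm :=
  posm.elementsMk C (unitOp m arm em C)

variable (ρ : ∀ C : c,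
  arm.obj (op (posm.elementsMk C (unitOp m arm em C))) ≅ coyoneda.obj (op C))

/-- The inert morphism `η(C') ⟶ M` of `Θ_m` induced by an element `z ∈ m[M](C')`:
the free-algebra morphism on the composite `m[η(C')] ≅ c(C',−) ⟶ m[M]` classified
by `z` via the (co)Yoneda lemma. -/
def inert (M : posm.Elements) {C' : c} (z : (arm.obj (op M)).obj C') :
    unitObj m arm em C' ⟶ toTheta m arm M :=
  InducedCategory.homMk (m.free.map ((ρ C').hom ≫ coyonedaEquiv.symm z))

/-- The morphism between unit operations of `Θ_m` corresponding to a morphism in the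
category of elements of the arity `m[M]`. -/
def unitTrans {M : posm.Elements} {z₁ z₂ : (arm.obj (op M)).Elements} (φ : z₁ ⟶ z₂) :
    unitObj m arm em z₂.1 ⟶ unitObj m arm em z₁.1 :=
  InducedCategory.homMk (m.free.map ((ρ z₂.1).hom ≫ coyoneda.map φ.val.op ≫ (ρ z₁.1).inv))

lemma unitTrans_comp_inert {M : posm.Elements} {z₁ z₂ : (arm.obj (op M)).Elements}
    (φ : z₁ ⟶ z₂) :
    unitTrans m arm em ρ φ ≫ inert m arm em ρ M z₁.2 = inert m arm em ρ M z₂.2 := by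
  have key : coyoneda.map φ.val.op ≫ coyonedaEquiv.symm z₁.2
      = coyonedaEquiv.symm z₂.2 := by
    apply coyonedaEquiv.injective
    rw [← coyonedaEquiv_naturality, Equiv.apply_symm_apply, Equiv.apply_symm_apply]
    exact φ.2
  apply InducedCategory.hom_ext
  show m.free.map _ ≫ m.free.map _ = m.free.map _
  rw [← m.free.map_comp]
  congr 1
  exact (Category.assoc _ _ _).trans (whisker_eq _ ((Category.assoc _ _ _).trans
    ((whisker_eq _ (Iso.inv_hom_id_assoc _ _)).trans key)))

/-- The set of matching families for the Segal condition at the operation `M`: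
families of elements of `P` at the unit operations, indexed by the category of elements of
the arity `m[M]`, compatible with the transition maps induced by the morphisms between
unit operations. -/
def segalFamilies (P : (Theta m arm)ᵒᵖ ⥤ Type) (M : posm.Elements) : Type :=
  { s : ∀ z : (arm.obj (op M)).Elements, P.obj (op (unitObj m arm em z.1)) //
    ∀ {z₁ z₂ : (arm.obj (op M)).Elements} (φ : z₁ ⟶ z₂),
      P.map (unitTrans m arm em ρ φ).op (s z₁) = s z₂ }

/-- The canonical comparison map from `P(M)` to the limit of `P(η(−))` over the category of
elements of the arity `m[M]`, with legs induced by the inert morphisms `η(C') ⟶ M`. -/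
def segalMap (P : (Theta m arm)ᵒᵖ ⥤ Type) (M : posm.Elements) :
    P.obj (op (toTheta m arm M)) → segalFamilies m arm em ρ P M :=
  fun x =>
    ⟨fun z => P.map (inert m arm em ρ M z.2).op x, by
      intro z₁ z₂ φ
      show P.map (unitTrans m arm em ρ φ).op (P.map (inert m arm em ρ M z₁.2).op x)
        = P.map (inert m arm em ρ M z₂.2).op x
      rw [← unitTrans_comp_inert m arm em ρ φ, op_comp, FunctorToTypes.map_comp_apply]⟩

section EmMachinery

/-- Decoding an element of `m(X)(C)` into its familial representation. -/
def decE {X : c ⥤ Type} {C : c} (y : ((m : (c ⥤ Type) ⥤ c ⥤ Type).obj X).obj C) :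
    Σ I : posm.obj C, arm.obj (op (posm.elementsMk C I)) ⟶ X :=
  (em.inv.app X).app C y

/-- Encoding a familial representation into an element of `m(X)(C)`. -/
def encE {X : c ⥤ Type} {C : c}
    (s : Σ I : posm.obj C, arm.obj (op (posm.elementsMk C I)) ⟶ X) :
    ((m : (c ⥤ Type) ⥤ c ⥤ Type).obj X).obj C :=
  (em.hom.app X).app C s

lemma decE_encE {X : c ⥤ Type} {C : c}
    (s : Σ I : posm.obj C, arm.obj (op (posm.elementsMk C I)) ⟶ X) :
    decE m arm em (encE m arm em s) = s :=
  types_congr_hom (NatTrans.congr_app (em.hom_inv_id_app X) C) s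

lemma encE_decE {X : c ⥤ Type} {C : c}
    (y : ((m : (c ⥤ Type) ⥤ c ⥤ Type).obj X).obj C) :
    encE m arm em (decE m arm em y) = y :=
  types_congr_hom (NatTrans.congr_app (em.inv_hom_id_app X) C) y

lemma decE_injective {X : c ⥤ Type} {C : c}
    {y y' : ((m : (c ⥤ Type) ⥤ c ⥤ Type).obj X).obj C}
    (h : decE m arm em y = decE m arm em y') : y = y' := by
  have h2 := congrArg (encE m arm em) h
  rwa [encE_decE, encE_decE] at h2

lemma decE_map {X Y : c ⥤ Type} (t : X ⟶ Y) {C : c}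
    (y : ((m : (c ⥤ Type) ⥤ c ⥤ Type).obj X).obj C) :
    decE m arm em (((m : (c ⥤ Type) ⥤ c ⥤ Type).map t).app C y)
      = ⟨(decE m arm em y).1, (decE m arm em y).2 ≫ t⟩ :=
  types_congr_hom (NatTrans.congr_app (em.inv.naturality t) C) y

lemma decE_res {X : c ⥤ Type} {C C' : c} (f : C ⟶ C')
    (y : ((m : (c ⥤ Type) ⥤ c ⥤ Type).obj X).obj C) :
    decE m arm em (((m : (c ⥤ Type) ⥤ c ⥤ Type).obj X).map f y)
      = ⟨posm.map f (decE m arm em y).1,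
          arm.map (elHom posm f (decE m arm em y).1).op ≫ (decE m arm em y).2⟩ :=
  types_congr_hom ((em.inv.app X).naturality f) y

lemma unitFst {X : c ⥤ Type} {C : c} (x : X.obj C) :
    (decE m arm em ((m.η.app X).app C x)).1 = unitOp m arm em C := by
  let tT : X ⟶ termPSh := { app := fun _ => TypeCat.ofHom fun _ => PUnit.unit, naturality := fun _ _ _ => rfl }
  have h1 : ((m : (c ⥤ Type) ⥤ c ⥤ Type).map tT).app C ((m.η.app X).app C x)
      = (m.η.app termPSh).app C PUnit.unit :=
    (types_congr_hom (NatTrans.congr_app (m.η.naturality tT) C) x).symm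
  have h2 := congrArg (fun s => s.1) (congrArg (decE m arm em) h1)
  rw [decE_map] at h2
  exact h2

private lemma sig_fst {Y : c ⥤ Type} {C : c}
    (s : Σ I : posm.obj C, arm.obj (op (posm.elementsMk C I)) ⟶ Y) {I₀ : posm.obj C}
    (h : s.1 = I₀) :
    s = ⟨I₀, eqToHom (congrArg (fun I => arm.obj (op (posm.elementsMk C I))) h.symm) ≫ s.2⟩ := by
  obtain ⟨I, g⟩ := s
  cases h
  simp

/-- The canonical classifying map `m[η C] ⟶ X` of an element `x ∈ X(C)`. -/
noncomputable def tauE {X : c ⥤ Type} {C : c} (x : X.obj C) :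
    arm.obj (op (posm.elementsMk C (unitOp m arm em C))) ⟶ X :=
  eqToHom (congrArg (fun I => arm.obj (op (posm.elementsMk C I))) (unitFst m arm em x).symm)
    ≫ (decE m arm em ((m.η.app X).app C x)).2

lemma decE_eta {X : c ⥤ Type} {C : c} (x : X.obj C) :
    decE m arm em ((m.η.app X).app C x) = ⟨unitOp m arm em C, tauE m arm em x⟩ :=
  sig_fst arm _ (unitFst m arm em x)

lemma tauE_nat {X Y : c ⥤ Type} (t : X ⟶ Y) {C : c} (x : X.obj C) :
    tauE m arm em (t.app C x) = tauE m arm em x ≫ t := by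
  have h0 : (m.η.app Y).app C (t.app C x)
      = ((m : (c ⥤ Type) ⥤ c ⥤ Type).map t).app C ((m.η.app X).app C x) :=
    types_congr_hom (NatTrans.congr_app (m.η.naturality t) C) x
  have h1 : (⟨unitOp m arm em C, tauE m arm em (t.app C x)⟩ :
      Σ I : posm.obj C, arm.obj (op (posm.elementsMk C I)) ⟶ Y)
      = ⟨unitOp m arm em C, tauE m arm em x ≫ t⟩ := by
    rw [← decE_eta, h0, decE_map, decE_eta]
  exact sigSnd h1

/-- The distinguished element of the unit arity. -/
def z0 (C : c) : (arm.obj (op (posm.elementsMk C (unitOp m arm em C)))).obj C :=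
  (ρ C).inv.app C (𝟙 C)

/-- The comparison automorphism of the unit arity. -/
noncomputable def hA (C : c) :
    arm.obj (op (posm.elementsMk C (unitOp m arm em C)))
      ⟶ arm.obj (op (posm.elementsMk C (unitOp m arm em C))) :=
  tauE m arm em (z0 m arm em ρ C)

lemma coyEq_z0 (C : c) : coyonedaEquiv.symm (z0 m arm em ρ C) = (ρ C).inv := by
  rw [Equiv.symm_apply_eq, coyonedaEquiv_apply]
  rfl

lemma bridge {X : c ⥤ Type} {C : c} (x : X.obj C) :
    tauE m arm em x = hA m arm em ρ C ≫ (ρ C).hom ≫ coyonedaEquiv.symm x := by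
  have e1 : ((ρ C).hom ≫ coyonedaEquiv.symm x).app C (z0 m arm em ρ C) = x := by
    show (coyonedaEquiv.symm x).app C ((ρ C).hom.app C ((ρ C).inv.app C (𝟙 C))) = x
    have h2 : (ρ C).hom.app C ((ρ C).inv.app C (𝟙 C)) = 𝟙 C :=
      types_congr_hom (NatTrans.congr_app (ρ C).inv_hom_id C) (𝟙 C)
    rw [h2, coyonedaEquiv_symm_app_apply]
    simp
  calc tauE m arm em x
      = tauE m arm em (((ρ C).hom ≫ coyonedaEquiv.symm x).app C (z0 m arm em ρ C)) := by
        rw [e1]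
    _ = tauE m arm em (z0 m arm em ρ C) ≫ ((ρ C).hom ≫ coyonedaEquiv.symm x) :=
        tauE_nat m arm em _ _
    _ = hA m arm em ρ C ≫ (ρ C).hom ≫ coyonedaEquiv.symm x := rfl

/-- The generic element of `m(m[M])(M.1)` corresponding to the identity of the arity. -/
def IDel (M : posm.Elements) :
    ((m : (c ⥤ Type) ⥤ c ⥤ Type).obj (arm.obj (op M))).obj M.1 :=
  encE m arm em ⟨M.2, 𝟙 (arm.obj (op M))⟩

lemma decE_IDel (M : posm.Elements) :
    decE m arm em (IDel m arm em M) = ⟨M.2, 𝟙 (arm.obj (op M))⟩ :=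
  decE_encE m arm em _

lemma genFact {X : c ⥤ Type} {C : c} (y : ((m : (c ⥤ Type) ⥤ c ⥤ Type).obj X).obj C) :
    ((m : (c ⥤ Type) ⥤ c ⥤ Type).map (decE m arm em y).2).app C
      (IDel m arm em (posm.elementsMk C (decE m arm em y).1)) = y := by
  apply decE_injective m arm em
  rw [decE_map, decE_IDel]
  simp

end EmMachinery


section ThetaMorphisms

/-- The Θ-morphism between free algebras induced by a map of arities. -/
def fmTh {M₁ M₂ : posm.Elements} (k : arm.obj (op M₁) ⟶ arm.obj (op M₂)) :
    toTheta m arm M₁ ⟶ toTheta m arm M₂ :=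
  InducedCategory.homMk (m.free.map k)

/-- The Θ-morphism between free algebras induced by a Kleisli map of arities. -/
def klTh {M₁ M₂ : posm.Elements}
    (k : arm.obj (op M₁) ⟶ ((m : (c ⥤ Type) ⥤ c ⥤ Type)).obj (arm.obj (op M₂))) :
    toTheta m arm M₁ ⟶ toTheta m arm M₂ :=
  InducedCategory.homMk (kl m k)

/-- The Θ-morphism classified by an element `e ∈ m(m[M])(C₀)`. -/
def LamH (M : posm.Elements) {C₀ : c}
    (e : ((m : (c ⥤ Type) ⥤ c ⥤ Type).obj (arm.obj (op M))).obj C₀) :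
    unitObj m arm em C₀ ⟶ toTheta m arm M :=
  klTh m arm ((ρ C₀).hom ≫ coyonedaEquiv.symm e)

/-- The active Θ-morphism of an operation. -/
def actvH (M : posm.Elements) : unitObj m arm em M.1 ⟶ toTheta m arm M :=
  LamH m arm em ρ M (IDel m arm em M)

/-- The Θ-morphism between unit operations induced by a morphism of `c`. -/
def cmorH {C C' : c} (f : C ⟶ C') : unitObj m arm em C' ⟶ unitObj m arm em C :=
  InducedCategory.homMk (m.free.map ((ρ C').hom ≫ coyoneda.map f.op ≫ (ρ C).inv))

lemma cmorH_eq_unitTrans {M : posm.Elements} {z₁ z₂ : (arm.obj (op M)).Elements}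
    (φ : z₁ ⟶ z₂) : cmorH m arm em ρ φ.val = unitTrans m arm em ρ φ :=
  rfl

lemma cmorH_comp_inert {M : posm.Elements} {C C' : c} (f : C ⟶ C')
    (z : (arm.obj (op M)).obj C) :
    cmorH m arm em ρ f ≫ inert m arm em ρ M z
      = inert m arm em ρ M ((arm.obj (op M)).map f z) := by
  apply InducedCategory.hom_ext
  show m.free.map ((ρ C').hom ≫ coyoneda.map f.op ≫ (ρ C).inv)
      ≫ m.free.map ((ρ C).hom ≫ coyonedaEquiv.symm z)
      = m.free.map ((ρ C').hom ≫ coyonedaEquiv.symm ((arm.obj (op M)).map f z))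
  rw [← m.free.map_comp]
  congr 1
  simp only [Category.assoc, Iso.inv_hom_id_assoc]
  rw [coyEq_symm_map]

lemma inert_comp_fmTh {M₁ M₂ : posm.Elements} {C₀ : c} (z : (arm.obj (op M₁)).obj C₀)
    (k : arm.obj (op M₁) ⟶ arm.obj (op M₂)) :
    inert m arm em ρ M₁ z ≫ fmTh m arm k = inert m arm em ρ M₂ (k.app C₀ z) := by
  apply InducedCategory.hom_ext
  show m.free.map ((ρ C₀).hom ≫ coyonedaEquiv.symm z) ≫ m.free.map k
      = m.free.map ((ρ C₀).hom ≫ coyonedaEquiv.symm (k.app C₀ z))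
  rw [← m.free.map_comp]
  congr 1
  rw [Category.assoc, coyEq_symm_comp]

lemma inert_comp_klTh {M₁ M₂ : posm.Elements} {C₀ : c} (z : (arm.obj (op M₁)).obj C₀)
    (k : arm.obj (op M₁) ⟶ ((m : (c ⥤ Type) ⥤ c ⥤ Type)).obj (arm.obj (op M₂))) :
    inert m arm em ρ M₁ z ≫ klTh m arm k = LamH m arm em ρ M₂ (k.app C₀ z) := by
  apply InducedCategory.hom_ext
  show m.free.map ((ρ C₀).hom ≫ coyonedaEquiv.symm z) ≫ kl m k
      = kl m ((ρ C₀).hom ≫ coyonedaEquiv.symm (k.app C₀ z))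
  rw [freeMap_comp_kl]
  congr 1
  rw [Category.assoc, coyEq_symm_comp]

lemma inert_comp_LamH {M : posm.Elements} {C C₀ : c}
    (z : (arm.obj (op (posm.elementsMk C (unitOp m arm em C)))).obj C₀)
    (e : ((m : (c ⥤ Type) ⥤ c ⥤ Type).obj (arm.obj (op M))).obj C) :
    inert m arm em ρ (posm.elementsMk C (unitOp m arm em C)) z ≫ LamH m arm em ρ M e
      = LamH m arm em ρ M
          (((m : (c ⥤ Type) ⥤ c ⥤ Type).obj (arm.obj (op M))).map ((ρ C).hom.app C₀ z) e) := by
  rw [show LamH m arm em ρ M e = klTh m arm ((ρ C).hom ≫ coyonedaEquiv.symm e) from rfl,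
    inert_comp_klTh]
  rfl

lemma LamH_comp_fmTh {M₁ M₂ : posm.Elements} {C₀ : c}
    (e : ((m : (c ⥤ Type) ⥤ c ⥤ Type).obj (arm.obj (op M₁))).obj C₀)
    (k : arm.obj (op M₁) ⟶ arm.obj (op M₂)) :
    LamH m arm em ρ M₁ e ≫ fmTh m arm k
      = LamH m arm em ρ M₂ (((m : (c ⥤ Type) ⥤ c ⥤ Type).map k).app C₀ e) := by
  apply InducedCategory.hom_ext
  show kl m ((ρ C₀).hom ≫ coyonedaEquiv.symm e) ≫ m.free.map k = kl m _
  rw [kl_comp_freeMap]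
  congr 1
  rw [Category.assoc, coyEq_symm_comp]

lemma LamH_comp_klTh {M₁ M₂ : posm.Elements} {C₀ : c}
    (e : ((m : (c ⥤ Type) ⥤ c ⥤ Type).obj (arm.obj (op M₁))).obj C₀)
    (k : arm.obj (op M₁) ⟶ ((m : (c ⥤ Type) ⥤ c ⥤ Type)).obj (arm.obj (op M₂))) :
    LamH m arm em ρ M₁ e ≫ klTh m arm k
      = LamH m arm em ρ M₂
          ((m.μ.app (arm.obj (op M₂))).app C₀
            (((m : (c ⥤ Type) ⥤ c ⥤ Type).map k).app C₀ e)) := by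
  apply InducedCategory.hom_ext
  show kl m ((ρ C₀).hom ≫ coyonedaEquiv.symm e) ≫ kl m k = kl m _
  rw [kl_comp_kl]
  congr 1
  rw [Category.assoc, coyEq_symm_comp]
  rfl

lemma cmorH_comp_LamH {M : posm.Elements} {C C' : c} (f : C ⟶ C')
    (e : ((m : (c ⥤ Type) ⥤ c ⥤ Type).obj (arm.obj (op M))).obj C) :
    cmorH m arm em ρ f ≫ LamH m arm em ρ M e
      = LamH m arm em ρ M (((m : (c ⥤ Type) ⥤ c ⥤ Type).obj (arm.obj (op M))).map f e) := by
  apply InducedCategory.hom_ext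
  show m.free.map ((ρ C').hom ≫ coyoneda.map f.op ≫ (ρ C).inv)
      ≫ kl m ((ρ C).hom ≫ coyonedaEquiv.symm e) = kl m _
  rw [freeMap_comp_kl]
  congr 1
  simp only [Category.assoc, Iso.inv_hom_id_assoc]
  rw [coyEq_symm_map]

lemma mapH_IDel (C : c) :
    ((m : (c ⥤ Type) ⥤ c ⥤ Type).map (hA m arm em ρ C)).app C
        (IDel m arm em (posm.elementsMk C (unitOp m arm em C)))
      = (m.η.app (arm.obj (op (posm.elementsMk C (unitOp m arm em C))))).app C
          (z0 m arm em ρ C) := by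
  apply decE_injective m arm em
  rw [decE_map, decE_IDel, decE_eta]
  rw [Category.id_comp]
  rfl

lemma actvH_comp_h (C : c) :
    actvH m arm em ρ (posm.elementsMk C (unitOp m arm em C))
        ≫ fmTh m arm (hA m arm em ρ C)
      = 𝟙 (unitObj m arm em C) := by
  apply InducedCategory.hom_ext
  show kl m ((ρ C).hom ≫ coyonedaEquiv.symm
        (IDel m arm em (posm.elementsMk C (unitOp m arm em C))))
      ≫ m.free.map (hA m arm em ρ C)
      = 𝟙 (m.free.obj (arm.obj (op (posm.elementsMk C (unitOp m arm em C)))))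
  rw [kl_comp_freeMap]
  have key : ((ρ C).hom ≫ coyonedaEquiv.symm
        (IDel m arm em (posm.elementsMk C (unitOp m arm em C))))
        ≫ (m : (c ⥤ Type) ⥤ c ⥤ Type).map (hA m arm em ρ C)
      = 𝟙 (arm.obj (op (posm.elementsMk C (unitOp m arm em C))))
          ≫ m.η.app (arm.obj (op (posm.elementsMk C (unitOp m arm em C)))) := by
    have h3 : coyonedaEquiv.symm (z0 m arm em ρ C)
          ≫ m.η.app (arm.obj (op (posm.elementsMk C (unitOp m arm em C))))
        = coyonedaEquiv.symm
            ((m.η.app (arm.obj (op (posm.elementsMk C (unitOp m arm em C))))).app C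
              (z0 m arm em ρ C)) :=
      coyEq_symm_comp _ _
    rw [Category.assoc, coyEq_symm_comp, mapH_IDel m arm em ρ C, ← h3, coyEq_z0,
      ← Category.assoc, Iso.hom_inv_id]
  rw [key, kl_eta, m.free.map_id]

end ThetaMorphisms


section Backward

variable (P : (Theta m arm)ᵒᵖ ⥤ Type)

/-- The underlying copresheaf of the algebra constructed from a Segal presheaf. -/
def Xf : c ⥤ Type where
  obj C := P.obj (op (unitObj m arm em C))
  map {C C'} f := P.map (cmorH m arm em ρ f).op
  map_id C := by
    have h : cmorH m arm em ρ (𝟙 C) = 𝟙 (unitObj m arm em C) := by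
      apply InducedCategory.hom_ext
      show m.free.map ((ρ C).hom ≫ coyoneda.map (𝟙 C).op ≫ (ρ C).inv)
          = 𝟙 (m.free.obj (arm.obj (op (posm.elementsMk C (unitOp m arm em C)))))
      rw [op_id, coyoneda.map_id, Category.id_comp, Iso.hom_inv_id, m.free.map_id]
    show P.map (cmorH m arm em ρ (𝟙 C)).op = 𝟙 (P.obj (op (unitObj m arm em C)))
    rw [h, op_id, P.map_id]
  map_comp {C C' C''} f g := by
    have h : cmorH m arm em ρ (f ≫ g) = cmorH m arm em ρ g ≫ cmorH m arm em ρ f := by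
      apply InducedCategory.hom_ext
      show m.free.map ((ρ C'').hom ≫ coyoneda.map (f ≫ g).op ≫ (ρ C).inv)
          = m.free.map ((ρ C'').hom ≫ coyoneda.map g.op ≫ (ρ C').inv)
            ≫ m.free.map ((ρ C').hom ≫ coyoneda.map f.op ≫ (ρ C).inv)
      rw [← m.free.map_comp]
      congr 1
      rw [op_comp, coyoneda.map_comp]
      simp only [Category.assoc, Iso.inv_hom_id_assoc]
    show P.map (cmorH m arm em ρ (f ≫ g)).op
        = P.map (cmorH m arm em ρ f).op ≫ P.map (cmorH m arm em ρ g).op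
    rw [h, op_comp, P.map_comp]

/-- The comparison map from `P(M)` to maps of copresheaves `m[M] ⟶ X`. -/
def Psi (M : posm.Elements) (q : P.obj (op (toTheta m arm M))) :
    arm.obj (op M) ⟶ Xf m arm em ρ P where
  app C' := TypeCat.ofHom fun z => P.map (inert m arm em ρ M z).op q
  naturality {C₁ C₂} f := by
    ext z
    show P.map (inert m arm em ρ M ((arm.obj (op M)).map f z)).op q
        = P.map (cmorH m arm em ρ f).op (P.map (inert m arm em ρ M z).op q)
    rw [← cmorH_comp_inert m arm em ρ f z, op_comp, FunctorToTypes.map_comp_apply]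

variable (hseg : ∀ M : posm.Elements, Function.Bijective (segalMap m arm em ρ P M))

/-- The Segal condition as a bijection `P(M) ≃ Hom(m[M], X)`. -/
noncomputable def PsiEquiv (M : posm.Elements) :
    P.obj (op (toTheta m arm M)) ≃ (arm.obj (op M) ⟶ Xf m arm em ρ P) :=
  Equiv.ofBijective (Psi m arm em ρ P M) (by
    constructor
    · intro q q' h
      apply (hseg M).1
      apply Subtype.ext
      funext z
      exact types_congr_hom (congrFun (congrArg NatTrans.app h) z.1) z.2
    · intro t
      obtain ⟨q, hq⟩ := (hseg M).2 ⟨fun z => t.app z.1 z.2, by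
        intro z₁ z₂ φ
        have h1 := types_congr_hom (t.naturality φ.val) z₁.2
        show P.map (unitTrans m arm em ρ φ).op (t.app z₁.1 z₁.2) = t.app z₂.1 z₂.2
        rw [← φ.2]
        exact h1.symm⟩
      refine ⟨q, ?_⟩
      apply NatTrans.ext
      ext C' z
      exact congrFun (congrArg Subtype.val hq) ⟨C', z⟩)

lemma PsiEquiv_apply (M : posm.Elements) (q : P.obj (op (toTheta m arm M))) :
    PsiEquiv m arm em ρ P hseg M q = Psi m arm em ρ P M q :=
  rfl

lemma Psi_map_fmTh {M₁ M₂ : posm.Elements} (k : arm.obj (op M₁) ⟶ arm.obj (op M₂))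
    (q : P.obj (op (toTheta m arm M₂))) :
    Psi m arm em ρ P M₁ (P.map (fmTh m arm k).op q) = k ≫ Psi m arm em ρ P M₂ q := by
  apply NatTrans.ext
  ext C₀ z
  show P.map (inert m arm em ρ M₁ z).op (P.map (fmTh m arm k).op q)
      = P.map (inert m arm em ρ M₂ (k.app C₀ z)).op q
  rw [← FunctorToTypes.map_comp_apply, ← op_comp, inert_comp_fmTh]

lemma PsiInv_comp {M₁ M₂ : posm.Elements} (k : arm.obj (op M₁) ⟶ arm.obj (op M₂))
    (g : arm.obj (op M₂) ⟶ Xf m arm em ρ P) :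
    (PsiEquiv m arm em ρ P hseg M₁).symm (k ≫ g)
      = P.map (fmTh m arm k).op ((PsiEquiv m arm em ρ P hseg M₂).symm g) := by
  rw [Equiv.symm_apply_eq, PsiEquiv_apply, Psi_map_fmTh,
    ← PsiEquiv_apply m arm em ρ P hseg M₂, Equiv.apply_symm_apply]

lemma elIDel {C C' : c} (f : C ⟶ C') (I : posm.obj C) :
    ((m : (c ⥤ Type) ⥤ c ⥤ Type).map (arm.map (elHom posm f I).op)).app C'
        (IDel m arm em (posm.elementsMk C' (posm.map f I)))
      = ((m : (c ⥤ Type) ⥤ c ⥤ Type).obj (arm.obj (op (posm.elementsMk C I)))).map f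
          (IDel m arm em (posm.elementsMk C I)) := by
  apply decE_injective m arm em
  rw [decE_map, decE_IDel, decE_res, decE_IDel]
  simp

/-- The structure map evaluated on decoded data. -/
noncomputable def Afun (C : c)
    (s : Σ I : posm.obj C, arm.obj (op (posm.elementsMk C I)) ⟶ Xf m arm em ρ P) :
    (Xf m arm em ρ P).obj C :=
  P.map (actvH m arm em ρ (posm.elementsMk C s.1)).op
    ((PsiEquiv m arm em ρ P hseg (posm.elementsMk C s.1)).symm s.2)

/-- The structure map of the algebra constructed from a Segal presheaf. -/
noncomputable def aMap :
    ((m : (c ⥤ Type) ⥤ c ⥤ Type)).obj (Xf m arm em ρ P) ⟶ Xf m arm em ρ P where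
  app C := TypeCat.ofHom fun y => Afun m arm em ρ P hseg C (decE m arm em y)
  naturality {C C'} f := by
    ext y
    show Afun m arm em ρ P hseg C'
        (decE m arm em (((m : (c ⥤ Type) ⥤ c ⥤ Type).obj (Xf m arm em ρ P)).map f y))
      = P.map (cmorH m arm em ρ f).op (Afun m arm em ρ P hseg C (decE m arm em y))
    rw [decE_res]
    show P.map (actvH m arm em ρ (posm.elementsMk C' (posm.map f (decE m arm em y).1))).op
        ((PsiEquiv m arm em ρ P hseg _).symm
          (arm.map (elHom posm f (decE m arm em y).1).op ≫ (decE m arm em y).2))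
      = P.map (cmorH m arm em ρ f).op
          (P.map (actvH m arm em ρ (posm.elementsMk C (decE m arm em y).1)).op
            ((PsiEquiv m arm em ρ P hseg _).symm (decE m arm em y).2))
    rw [PsiInv_comp, ← FunctorToTypes.map_comp_apply, ← op_comp,
      ← FunctorToTypes.map_comp_apply, ← op_comp]
    congr 2
    have hL : actvH m arm em ρ (posm.elementsMk C' (posm.map f (decE m arm em y).1))
          ≫ fmTh m arm (arm.map (elHom posm f (decE m arm em y).1).op)
        = LamH m arm em ρ (posm.elementsMk C (decE m arm em y).1)
            (((m : (c ⥤ Type) ⥤ c ⥤ Type).obj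
                (arm.obj (op (posm.elementsMk C (decE m arm em y).1)))).map f
              (IDel m arm em (posm.elementsMk C (decE m arm em y).1))) := by
      rw [show actvH m arm em ρ (posm.elementsMk C' (posm.map f (decE m arm em y).1))
          = LamH m arm em ρ _ (IDel m arm em _) from rfl]
      rw [LamH_comp_fmTh, elIDel]
    have hR : cmorH m arm em ρ f ≫ actvH m arm em ρ (posm.elementsMk C (decE m arm em y).1)
        = LamH m arm em ρ (posm.elementsMk C (decE m arm em y).1)
            (((m : (c ⥤ Type) ⥤ c ⥤ Type).obj
                (arm.obj (op (posm.elementsMk C (decE m arm em y).1)))).map f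
              (IDel m arm em (posm.elementsMk C (decE m arm em y).1))) := by
      rw [show actvH m arm em ρ (posm.elementsMk C (decE m arm em y).1)
          = LamH m arm em ρ _ (IDel m arm em _) from rfl]
      rw [cmorH_comp_LamH]
    rw [hL, hR]

lemma master {M : posm.Elements} (g : arm.obj (op M) ⟶ Xf m arm em ρ P) {C₀ : c}
    (e : ((m : (c ⥤ Type) ⥤ c ⥤ Type).obj (arm.obj (op M))).obj C₀) :
    P.map (LamH m arm em ρ M e).op ((PsiEquiv m arm em ρ P hseg M).symm g)
      = (aMap m arm em ρ P hseg).app C₀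
          (((m : (c ⥤ Type) ⥤ c ⥤ Type).map g).app C₀ e) := by
  show _ = Afun m arm em ρ P hseg C₀
      (decE m arm em (((m : (c ⥤ Type) ⥤ c ⥤ Type).map g).app C₀ e))
  rw [decE_map]
  show _ = P.map (actvH m arm em ρ (posm.elementsMk C₀ (decE m arm em e).1)).op
      ((PsiEquiv m arm em ρ P hseg _).symm ((decE m arm em e).2 ≫ g))
  rw [PsiInv_comp, ← FunctorToTypes.map_comp_apply, ← op_comp]
  congr 2
  rw [show actvH m arm em ρ (posm.elementsMk C₀ (decE m arm em e).1)
      = LamH m arm em ρ _ (IDel m arm em _) from rfl]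
  rw [LamH_comp_fmTh, genFact]

lemma PsiInv_kl {M₁ M₂ : posm.Elements}
    (k : arm.obj (op M₁) ⟶ ((m : (c ⥤ Type) ⥤ c ⥤ Type)).obj (arm.obj (op M₂)))
    (g : arm.obj (op M₂) ⟶ Xf m arm em ρ P) :
    (PsiEquiv m arm em ρ P hseg M₁).symm
        (k ≫ (m : (c ⥤ Type) ⥤ c ⥤ Type).map g ≫ aMap m arm em ρ P hseg)
      = P.map (klTh m arm k).op ((PsiEquiv m arm em ρ P hseg M₂).symm g) := by
  rw [Equiv.symm_apply_eq, PsiEquiv_apply]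
  apply NatTrans.ext
  ext C₀ z
  show (k ≫ (m : (c ⥤ Type) ⥤ c ⥤ Type).map g ≫ aMap m arm em ρ P hseg).app C₀ z
      = P.map (inert m arm em ρ M₁ z).op
          (P.map (klTh m arm k).op ((PsiEquiv m arm em ρ P hseg M₂).symm g))
  rw [← FunctorToTypes.map_comp_apply, ← op_comp, inert_comp_klTh, master]
  rfl

end Backward


section AlgebraLaws

lemma map_rhoHom_z0 {C C₀ : c}
    (w : (arm.obj (op (posm.elementsMk C (unitOp m arm em C)))).obj C₀) :
    (arm.obj (op (posm.elementsMk C (unitOp m arm em C)))).map ((ρ C).hom.app C₀ w)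
        (z0 m arm em ρ C) = w := by
  have h : (ρ C).inv.app C₀ ((coyoneda.obj (op C)).map ((ρ C).hom.app C₀ w) (𝟙 C))
      = (arm.obj (op (posm.elementsMk C (unitOp m arm em C)))).map ((ρ C).hom.app C₀ w)
          ((ρ C).inv.app C (𝟙 C)) :=
    types_congr_hom ((ρ C).inv.naturality ((ρ C).hom.app C₀ w)) (𝟙 C)
  have h2 : (coyoneda.obj (op C)).map ((ρ C).hom.app C₀ w) (𝟙 C) = (ρ C).hom.app C₀ w := by
    show 𝟙 C ≫ (ρ C).hom.app C₀ w = (ρ C).hom.app C₀ w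
    rw [Category.id_comp]
  rw [h2] at h
  have h3 : (ρ C).inv.app C₀ ((ρ C).hom.app C₀ w) = w :=
    types_congr_hom (NatTrans.congr_app (ρ C).hom_inv_id C₀) w
  show (arm.obj (op (posm.elementsMk C (unitOp m arm em C)))).map ((ρ C).hom.app C₀ w)
      ((ρ C).inv.app C (𝟙 C)) = w
  rw [← h, h3]

lemma inert_eq_cmorH {C C₀ : c}
    (w : (arm.obj (op (posm.elementsMk C (unitOp m arm em C)))).obj C₀) :
    inert m arm em ρ (posm.elementsMk C (unitOp m arm em C)) w
      = cmorH m arm em ρ ((ρ C).hom.app C₀ w) := by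
  apply InducedCategory.hom_ext
  show m.free.map ((ρ C₀).hom ≫ coyonedaEquiv.symm w)
      = m.free.map ((ρ C₀).hom ≫ coyoneda.map ((ρ C).hom.app C₀ w).op ≫ (ρ C).inv)
  congr 1
  rw [← coyEq_z0 m arm em ρ C, coyEq_symm_map, map_rhoHom_z0]

variable (P : (Theta m arm)ᵒᵖ ⥤ Type)
    (hseg : ∀ M : posm.Elements, Function.Bijective (segalMap m arm em ρ P M))

lemma PsiInv_tau {C : c} (p : P.obj (op (unitObj m arm em C))) :
    (PsiEquiv m arm em ρ P hseg (posm.elementsMk C (unitOp m arm em C))).symm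
        (tauE m arm em (X := Xf m arm em ρ P) p)
      = P.map ((fmTh m arm (hA m arm em ρ C) :
          toTheta m arm (posm.elementsMk C (unitOp m arm em C))
            ⟶ toTheta m arm (posm.elementsMk C (unitOp m arm em C)))).op p := by
  rw [Equiv.symm_apply_eq, PsiEquiv_apply]
  apply NatTrans.ext
  ext C₀ z
  show (tauE m arm em (X := Xf m arm em ρ P) p).app C₀ z
      = P.map (inert m arm em ρ (posm.elementsMk C (unitOp m arm em C)) z).op
          (P.map (fmTh m arm (hA m arm em ρ C)).op p)
  erw [← FunctorToTypes.map_comp_apply, ← op_comp, inert_comp_fmTh, inert_eq_cmorH]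
  rw [bridge m arm em ρ (X := Xf m arm em ρ P) p]
  rfl

lemma aMap_unit :
    m.η.app (Xf m arm em ρ P) ≫ aMap m arm em ρ P hseg = 𝟙 (Xf m arm em ρ P) := by
  apply NatTrans.ext
  ext C p
  show Afun m arm em ρ P hseg C
      (decE m arm em ((m.η.app (Xf m arm em ρ P)).app C p)) = p
  rw [decE_eta]
  show P.map (actvH m arm em ρ (posm.elementsMk C (unitOp m arm em C))).op
      ((PsiEquiv m arm em ρ P hseg _).symm (tauE m arm em p)) = p
  erw [PsiInv_tau, ← FunctorToTypes.map_comp_apply, ← op_comp, actvH_comp_h]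
  have h5 : (𝟙 (unitObj m arm em C)).op = 𝟙 (op (unitObj m arm em C)) := rfl
  erw [h5]
  exact types_congr_hom (P.map_id _) p

lemma aMap_assoc
    (hMult : ∀ {X Y : c ⥤ Type} (f : X ⟶ Y),
      IsPullback ((m : (c ⥤ Type) ⥤ c ⥤ Type).map ((m : (c ⥤ Type) ⥤ c ⥤ Type).map f))
        (m.μ.app X) (m.μ.app Y) ((m : (c ⥤ Type) ⥤ c ⥤ Type).map f)) :
    m.μ.app (Xf m arm em ρ P) ≫ aMap m arm em ρ P hseg
      = (m : (c ⥤ Type) ⥤ c ⥤ Type).map (aMap m arm em ρ P hseg)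
          ≫ aMap m arm em ρ P hseg := by
  apply NatTrans.ext
  ext C y₂
  have key : ∀ (s : Σ I : posm.obj C,
      arm.obj (op (posm.elementsMk C I)) ⟶ Xf m arm em ρ P),
      (m.μ.app (Xf m arm em ρ P)).app C y₂
          = ((m : (c ⥤ Type) ⥤ c ⥤ Type).map s.2).app C
              (IDel m arm em (posm.elementsMk C s.1)) →
      Afun m arm em ρ P hseg C s
        = Afun m arm em ρ P hseg C
            (decE m arm em
              (((m : (c ⥤ Type) ⥤ c ⥤ Type).map (aMap m arm em ρ P hseg)).app C y₂)) := by
    rintro ⟨K, G⟩ hmatch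
    have hpb : IsPullback
        (((m : (c ⥤ Type) ⥤ c ⥤ Type).map ((m : (c ⥤ Type) ⥤ c ⥤ Type).map G)).app C)
        ((m.μ.app (arm.obj (op (posm.elementsMk C K)))).app C)
        ((m.μ.app (Xf m arm em ρ P)).app C)
        (((m : (c ⥤ Type) ⥤ c ⥤ Type).map G).app C) :=
      (hMult G).map ((evaluation c Type).obj C)
    obtain ⟨Y₂, hY1, hY2⟩ := exists_of_isPullback hpb y₂
      (IDel m arm em (posm.elementsMk C K)) hmatch
    have hdec : decE m arm em y₂
        = ⟨(decE m arm em Y₂).1,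
            (decE m arm em Y₂).2 ≫ (m : (c ⥤ Type) ⥤ c ⥤ Type).map G⟩ := by
      rw [← hY1, decE_map]
    have hTheta : actvH m arm em ρ (posm.elementsMk C (decE m arm em Y₂).1)
          ≫ klTh m arm (decE m arm em Y₂).2
        = actvH m arm em ρ (posm.elementsMk C K) := by
      rw [show actvH m arm em ρ (posm.elementsMk C (decE m arm em Y₂).1)
          = LamH m arm em ρ _ (IDel m arm em _) from rfl]
      rw [LamH_comp_klTh, genFact, hY2]
      rfl
    calc _
        = P.map (actvH m arm em ρ (posm.elementsMk C K)).op
            ((PsiEquiv m arm em ρ P hseg (posm.elementsMk C K)).symm G) := rfl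
      _ = P.map ((actvH m arm em ρ (posm.elementsMk C (decE m arm em Y₂).1)
            ≫ klTh m arm (decE m arm em Y₂).2)).op
            ((PsiEquiv m arm em ρ P hseg (posm.elementsMk C K)).symm G) := by
          rw [hTheta]
      _ = P.map (actvH m arm em ρ (posm.elementsMk C (decE m arm em Y₂).1)).op
            (P.map (klTh m arm (decE m arm em Y₂).2).op
              ((PsiEquiv m arm em ρ P hseg (posm.elementsMk C K)).symm G)) := by
          rw [← FunctorToTypes.map_comp_apply, ← op_comp]
      _ = P.map (actvH m arm em ρ (posm.elementsMk C (decE m arm em Y₂).1)).op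
            ((PsiEquiv m arm em ρ P hseg (posm.elementsMk C (decE m arm em Y₂).1)).symm
              ((decE m arm em Y₂).2
                ≫ ((m : (c ⥤ Type) ⥤ c ⥤ Type).map G ≫ aMap m arm em ρ P hseg))) := by
          rw [PsiInv_kl]
      _ = (show P.obj (op (unitObj m arm em C)) from Afun m arm em ρ P hseg C
            ⟨(decE m arm em Y₂).1,
              ((decE m arm em Y₂).2 ≫ (m : (c ⥤ Type) ⥤ c ⥤ Type).map G)
                ≫ aMap m arm em ρ P hseg⟩) := by
          show _ = P.map (actvH m arm em ρ (posm.elementsMk C (decE m arm em Y₂).1)).op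
            ((PsiEquiv m arm em ρ P hseg (posm.elementsMk C (decE m arm em Y₂).1)).symm
              (((decE m arm em Y₂).2 ≫ (m : (c ⥤ Type) ⥤ c ⥤ Type).map G)
                ≫ aMap m arm em ρ P hseg))
          rw [Category.assoc]
      _ = (show P.obj (op (unitObj m arm em C)) from Afun m arm em ρ P hseg C
            ⟨(decE m arm em y₂).1, (decE m arm em y₂).2 ≫ aMap m arm em ρ P hseg⟩) := by
          rw [hdec]
      _ = (show P.obj (op (unitObj m arm em C)) from Afun m arm em ρ P hseg C
            (decE m arm em
              (((m : (c ⥤ Type) ⥤ c ⥤ Type).map (aMap m arm em ρ P hseg)).app C y₂))) := by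
          rw [decE_map]
  exact key (decE m arm em ((m.μ.app (Xf m arm em ρ P)).app C y₂))
    (genFact m arm em _).symm

/-- The algebra constructed from a Segal presheaf. -/
noncomputable def algX
    (hMult : ∀ {X Y : c ⥤ Type} (f : X ⟶ Y),
      IsPullback ((m : (c ⥤ Type) ⥤ c ⥤ Type).map ((m : (c ⥤ Type) ⥤ c ⥤ Type).map f))
        (m.μ.app X) (m.μ.app Y) ((m : (c ⥤ Type) ⥤ c ⥤ Type).map f)) : m.Algebra where
  A := Xf m arm em ρ P
  a := aMap m arm em ρ P hseg
  unit := aMap_unit m arm em ρ P hseg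
  assoc := aMap_assoc m arm em ρ P hseg hMult

end AlgebraLaws


section NerveIsoSec

/-- Reinterpret a Θ-morphism as a morphism of algebras. -/
def toAlgHom {N₁ N₂ : Theta m arm} (u : N₁ ⟶ N₂) :
    theoryObj m arm N₁ ⟶ theoryObj m arm N₂ :=
  u.hom

variable (P : (Theta m arm)ᵒᵖ ⥤ Type)
    (hseg : ∀ M : posm.Elements, Function.Bijective (segalMap m arm em ρ P M))
    (hMult : ∀ {X Y : c ⥤ Type} (f : X ⟶ Y),
      IsPullback ((m : (c ⥤ Type) ⥤ c ⥤ Type).map ((m : (c ⥤ Type) ⥤ c ⥤ Type).map f))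
        (m.μ.app X) (m.μ.app Y) ((m : (c ⥤ Type) ⥤ c ⥤ Type).map f))

/-- The free-forgetful adjunction bijection at an arity. -/
noncomputable def extEquiv (Y : m.Algebra) (A : c ⥤ Type) :
    (A ⟶ Y.A) ≃ (m.free.obj A ⟶ Y) where
  toFun k := extHom m Y k
  invFun u := m.η.app A ≫ u.f
  left_inv k := eta_extHom m Y k
  right_inv u := extHom_unique m Y u

/-- The component bijection of the nerve comparison. -/
noncomputable def PhiEquiv (M : Theta m arm) :
    P.obj (op M) ≃ (theoryObj m arm M ⟶ algX m arm em ρ P hseg hMult) :=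
  (PsiEquiv m arm em ρ P hseg M).trans
    (extEquiv m (algX m arm em ρ P hseg hMult) (arm.obj (op M)))

/-- A Segal presheaf is isomorphic to the nerve of the constructed algebra. -/
noncomputable def nerveIso :
    P ≅ (nerveFunctor m arm).obj (algX m arm em ρ P hseg hMult) :=
  NatIso.ofComponents
    (fun M => Equiv.toIso (PhiEquiv m arm em ρ P hseg hMult (unop M)))
    (by
      intro M₁ M₂ u
      ext q
      obtain ⟨k, hk⟩ : ∃ k' : arm.obj (op (unop M₂))
            ⟶ ((m : (c ⥤ Type) ⥤ c ⥤ Type)).obj (arm.obj (op (unop M₁))),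
          (klTh m arm k' : toTheta m arm (unop M₂) ⟶ toTheta m arm (unop M₁)) = u.unop :=
        ⟨m.η.app (arm.obj (op (unop M₂))) ≫ (toAlgHom m arm u.unop).f,
          InducedCategory.hom_ext (extHom_unique m _ (toAlgHom m arm u.unop))⟩
      have h4 : ((klTh m arm k : toTheta m arm (unop M₂) ⟶ toTheta m arm (unop M₁))).op
          = u := by
        rw [hk]
        exact Quiver.Hom.op_unop u
      have h2 := PsiInv_kl m arm em ρ P hseg (k := k) (g := Psi m arm em ρ P (unop M₁) q)
      erw [← PsiEquiv_apply m arm em ρ P hseg (unop M₁) q, Equiv.symm_apply_apply] at h2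
      have h3 : k ≫ (m : (c ⥤ Type) ⥤ c ⥤ Type).map
              ((PsiEquiv m arm em ρ P hseg (unop M₁)) q)
            ≫ aMap m arm em ρ P hseg
          = (PsiEquiv m arm em ρ P hseg (unop M₂))
              (P.map (klTh m arm k).op q) := by
        rw [← h2, Equiv.apply_symm_apply]
      show extHom m (algX m arm em ρ P hseg hMult)
          (Psi m arm em ρ P (unop M₂) (P.map u q))
        = (thetaIncl m arm).map u.unop
            ≫ extHom m (algX m arm em ρ P hseg hMult) (Psi m arm em ρ P (unop M₁) q)
      rw [← hk, ← h4]
      show extHom m (algX m arm em ρ P hseg hMult)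
          ((PsiEquiv m arm em ρ P hseg (unop M₂))
            (P.map (klTh m arm k).op q))
        = kl m k ≫ extHom m (algX m arm em ρ P hseg hMult)
            ((PsiEquiv m arm em ρ P hseg (unop M₁)) q)
      rw [← h3]
      exact (kl_comp_extHom m (algX m arm em ρ P hseg hMult) _ _).symm)

end NerveIsoSec

section Forward

variable (Xa : m.Algebra)

/-- Reinterpret an element of the nerve as a morphism of algebras. -/
def nerveEl {N : Theta m arm} (v : ((nerveFunctor m arm).obj Xa).obj (op N)) :
    theoryObj m arm N ⟶ Xa :=
  v

lemma eval_inert {M : posm.Elements} {C' : c} (z : (arm.obj (op M)).obj C')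
    (v : theoryObj m arm (toTheta m arm M) ⟶ Xa) :
    coyonedaEquiv ((ρ C').inv
        ≫ m.η.app (arm.obj (op (posm.elementsMk C' (unitOp m arm em C'))))
        ≫ (toAlgHom m arm (inert m arm em ρ M z) ≫ v).f)
      = (m.η.app (arm.obj (op M)) ≫ v.f).app C' z := by
  have hf : (toAlgHom m arm (inert m arm em ρ M z) ≫ v).f
      = (m : (c ⥤ Type) ⥤ c ⥤ Type).map ((ρ C').hom ≫ coyonedaEquiv.symm z) ≫ v.f := rfl
  rw [hf]
  have harrow : (ρ C').inv
      ≫ m.η.app (arm.obj (op (posm.elementsMk C' (unitOp m arm em C'))))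
      ≫ ((m : (c ⥤ Type) ⥤ c ⥤ Type).map ((ρ C').hom ≫ coyonedaEquiv.symm z) ≫ v.f)
      = coyonedaEquiv.symm z ≫ m.η.app (arm.obj (op M)) ≫ v.f := by
    erw [← NatTrans.naturality_assoc]
    simp only [Functor.id_map, Category.assoc, Iso.inv_hom_id_assoc]
  rw [harrow, coyonedaEquiv_comp, Equiv.apply_symm_apply]

/-- The copresheaf morphism extracted from a Segal family on the nerve. -/
def tArr (M : posm.Elements)
    (s : segalFamilies m arm em ρ ((nerveFunctor m arm).obj Xa) M) :
    arm.obj (op M) ⟶ Xa.A where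
  app C' := TypeCat.ofHom fun z => coyonedaEquiv ((ρ C').inv
      ≫ m.η.app (arm.obj (op (posm.elementsMk C' (unitOp m arm em C'))))
      ≫ (nerveEl m arm Xa (s.1 ⟨C', z⟩)).f)
  naturality {C₁ C₂} f := by
    ext z
    have hcomp : ((nerveFunctor m arm).obj Xa).map
        (unitTrans m arm em ρ (elHom (arm.obj (op M)) f z)).op (s.1 ⟨C₁, z⟩)
        = s.1 ⟨C₂, (arm.obj (op M)).map f z⟩ :=
      s.2 (elHom (arm.obj (op M)) f z)
    show coyonedaEquiv ((ρ C₂).inv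
        ≫ m.η.app (arm.obj (op (posm.elementsMk C₂ (unitOp m arm em C₂))))
        ≫ (nerveEl m arm Xa (s.1 ⟨C₂, (arm.obj (op M)).map f z⟩)).f)
      = Xa.A.map f (coyonedaEquiv ((ρ C₁).inv
          ≫ m.η.app (arm.obj (op (posm.elementsMk C₁ (unitOp m arm em C₁))))
          ≫ (nerveEl m arm Xa (s.1 ⟨C₁, z⟩)).f))
    rw [← hcomp]
    have hfield : (nerveEl m arm Xa (((nerveFunctor m arm).obj Xa).map
          (unitTrans m arm em ρ (elHom (arm.obj (op M)) f z)).op (s.1 ⟨C₁, z⟩))).f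
        = (m : (c ⥤ Type) ⥤ c ⥤ Type).map
            ((ρ C₂).hom ≫ coyoneda.map f.op ≫ (ρ C₁).inv)
          ≫ (nerveEl m arm Xa (s.1 ⟨C₁, z⟩)).f := rfl
    rw [hfield]
    have harrow : (ρ C₂).inv
        ≫ m.η.app (arm.obj (op (posm.elementsMk C₂ (unitOp m arm em C₂))))
        ≫ ((m : (c ⥤ Type) ⥤ c ⥤ Type).map ((ρ C₂).hom ≫ coyoneda.map f.op ≫ (ρ C₁).inv)
            ≫ (nerveEl m arm Xa (s.1 ⟨C₁, z⟩)).f)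
        = coyoneda.map f.op ≫ (ρ C₁).inv
            ≫ m.η.app (arm.obj (op (posm.elementsMk C₁ (unitOp m arm em C₁))))
            ≫ (nerveEl m arm Xa (s.1 ⟨C₁, z⟩)).f := by
      erw [← NatTrans.naturality_assoc]
      simp only [Functor.id_map, Category.assoc, Iso.inv_hom_id_assoc]
    rw [harrow, ← coyonedaEquiv_naturality]

lemma nerve_segal (M : posm.Elements) :
    Function.Bijective (segalMap m arm em ρ ((nerveFunctor m arm).obj Xa) M) := by
  constructor
  · intro u u' h
    have hz : ∀ (C' : c) (z : (arm.obj (op M)).obj C'),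
        toAlgHom m arm (inert m arm em ρ M z) ≫ nerveEl m arm Xa u
          = toAlgHom m arm (inert m arm em ρ M z) ≫ nerveEl m arm Xa u' :=
      fun C' z => congrFun (congrArg Subtype.val h) ⟨C', z⟩
    have hf : m.η.app (arm.obj (op M)) ≫ (nerveEl m arm Xa u).f
        = m.η.app (arm.obj (op M)) ≫ (nerveEl m arm Xa u').f := by
      apply NatTrans.ext
      ext C' z
      erw [TypeCat.Fun.toFun_apply, TypeCat.Fun.toFun_apply, ← eval_inert m arm em ρ Xa z (nerveEl m arm Xa u),
        ← eval_inert m arm em ρ Xa z (nerveEl m arm Xa u'), hz C' z]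
    have hu : extHom m Xa (m.η.app (arm.obj (op M)) ≫ (nerveEl m arm Xa u).f)
        = nerveEl m arm Xa u := extHom_unique m Xa (nerveEl m arm Xa u)
    have hu' : extHom m Xa (m.η.app (arm.obj (op M)) ≫ (nerveEl m arm Xa u').f)
        = nerveEl m arm Xa u' := extHom_unique m Xa (nerveEl m arm Xa u')
    show nerveEl m arm Xa u = nerveEl m arm Xa u'
    rw [← hu, ← hu', hf]
  · intro s
    refine ⟨extHom m Xa (tArr m arm em ρ Xa M s), ?_⟩
    apply Subtype.ext
    funext z
    show toAlgHom m arm (inert m arm em ρ M z.2)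
        ≫ extHom m Xa (tArr m arm em ρ Xa M s) = s.1 z
    have h1 : toAlgHom m arm (inert m arm em ρ M z.2)
          ≫ extHom m Xa (tArr m arm em ρ Xa M s)
        = extHom m Xa (((ρ z.1).hom ≫ coyonedaEquiv.symm z.2)
            ≫ tArr m arm em ρ Xa M s) := by
      show m.free.map ((ρ z.1).hom ≫ coyonedaEquiv.symm z.2)
          ≫ extHom m Xa (tArr m arm em ρ Xa M s) = _
      rw [freeMap_comp_extHom]
    rw [h1]
    have h3 : coyonedaEquiv.symm ((tArr m arm em ρ Xa M s).app z.1 z.2)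
        = (ρ z.1).inv
          ≫ m.η.app (arm.obj (op (posm.elementsMk z.1 (unitOp m arm em z.1))))
          ≫ (nerveEl m arm Xa (s.1 ⟨z.1, z.2⟩)).f := by
      show coyonedaEquiv.symm (coyonedaEquiv ((ρ z.1).inv
          ≫ m.η.app (arm.obj (op (posm.elementsMk z.1 (unitOp m arm em z.1))))
          ≫ (nerveEl m arm Xa (s.1 ⟨z.1, z.2⟩)).f)) = _
      rw [Equiv.symm_apply_apply]
    have h2 : ((ρ z.1).hom ≫ coyonedaEquiv.symm z.2) ≫ tArr m arm em ρ Xa M s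
        = m.η.app (arm.obj (op (posm.elementsMk z.1 (unitOp m arm em z.1))))
            ≫ (nerveEl m arm Xa (s.1 z)).f := by
      rw [Category.assoc, coyEq_symm_comp, h3, ← Category.assoc, Iso.hom_inv_id,
        Category.id_comp]
      rfl
    rw [h2]
    have hfin : extHom m Xa (m.η.app (arm.obj (op (posm.elementsMk z.1 (unitOp m arm em z.1))))
          ≫ (nerveEl m arm Xa (s.1 z)).f)
        = nerveEl m arm Xa (s.1 z) := extHom_unique m Xa (nerveEl m arm Xa (s.1 z))
    exact hfin

end Forward

lemma segal_transport {P Q : (Theta m arm)ᵒᵖ ⥤ Type} (i : P ≅ Q) (M : posm.Elements)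
    (hQ : Function.Bijective (segalMap m arm em ρ Q M)) :
    Function.Bijective (segalMap m arm em ρ P M) := by
  have hx : ∀ w, i.inv.app (op (toTheta m arm M)) (i.hom.app (op (toTheta m arm M)) w) = w :=
    fun w => types_congr_hom (NatTrans.congr_app i.hom_inv_id (op (toTheta m arm M))) w
  constructor
  · intro x y hxy
    have h1 : segalMap m arm em ρ Q M (i.hom.app (op (toTheta m arm M)) x)
        = segalMap m arm em ρ Q M (i.hom.app (op (toTheta m arm M)) y) := by
      apply Subtype.ext
      funext z
      show Q.map (inert m arm em ρ M z.2).op (i.hom.app (op (toTheta m arm M)) x)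
          = Q.map (inert m arm em ρ M z.2).op (i.hom.app (op (toTheta m arm M)) y)
      rw [← FunctorToTypes.naturality, ← FunctorToTypes.naturality]
      exact congrArg (i.hom.app _) (congrFun (congrArg Subtype.val hxy) z)
    have h2 := hQ.1 h1
    have h3 := congrArg (i.inv.app (op (toTheta m arm M))) h2
    rw [hx, hx] at h3
    exact h3
  · intro s
    obtain ⟨q, hq⟩ := hQ.2 ⟨fun z => i.hom.app (op (unitObj m arm em z.1)) (s.1 z), by
      intro z₁ z₂ φ
      show Q.map (unitTrans m arm em ρ φ).op
          (i.hom.app (op (unitObj m arm em z₁.1)) (s.1 z₁))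
        = i.hom.app (op (unitObj m arm em z₂.1)) (s.1 z₂)
      rw [← FunctorToTypes.naturality]
      exact congrArg (i.hom.app _) (s.2 φ)⟩
    refine ⟨i.inv.app (op (toTheta m arm M)) q, ?_⟩
    apply Subtype.ext
    funext z
    show P.map (inert m arm em ρ M z.2).op (i.inv.app (op (toTheta m arm M)) q) = s.1 z
    rw [← FunctorToTypes.naturality]
    have h4 := congrFun (congrArg Subtype.val hq) z
    show i.inv.app (op (unitObj m arm em z.1)) (Q.map (inert m arm em ρ M z.2).op q) = s.1 z
    rw [show Q.map (inert m arm em ρ M z.2).op q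
        = i.hom.app (op (unitObj m arm em z.1)) (s.1 z) from h4]
    exact types_congr_hom (NatTrans.congr_app i.hom_inv_id (op (unitObj m arm em z.1))) (s.1 z)

/-- the Segal condition / Weber's nerve theorem.  A presheaf
`P : Θ_mᵒᵖ ⥤ Type` is isomorphic to the nerve of some `m`-algebra if and only if, for every
operation `M`, the canonical map from `P(M)` to the limit of `P(η(−))` over the category of
elements of the arity `m[M]` is a bijection. -/
theorem nerve_iff_segal
    (hUnitCartesian : ∀ {X Y : c ⥤ Type} (f : X ⟶ Y),
      IsPullback f (m.η.app X) (m.η.app Y) ((m : (c ⥤ Type) ⥤ c ⥤ Type).map f))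
    (hMultCartesian : ∀ {X Y : c ⥤ Type} (f : X ⟶ Y),
      IsPullback ((m : (c ⥤ Type) ⥤ c ⥤ Type).map ((m : (c ⥤ Type) ⥤ c ⥤ Type).map f))
        (m.μ.app X) (m.μ.app Y) ((m : (c ⥤ Type) ⥤ c ⥤ Type).map f))
    (P : (Theta m arm)ᵒᵖ ⥤ Type) :
    (∃ X : m.Algebra, Nonempty (P ≅ (nerveFunctor m arm).obj X)) ↔
      ∀ M : posm.Elements, Function.Bijective (segalMap m arm em ρ P M) := by
  constructor
  · rintro ⟨X, ⟨i⟩⟩ M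
    exact segal_transport m arm em ρ i M (nerve_segal m arm em ρ X M)
  · intro hs
    exact ⟨algX m arm em ρ P hs hMultCartesian,
      ⟨nerveIso m arm em ρ P hs hMultCartesian⟩⟩

end Statement6

end Fam
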